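/- In any metabelian Novikov algebra A, for all a,b,c,d,e in A, the element ((a*(b*c))*d)*e equals 0. -/
import Mathlib


/-- Setting: a nonassociative (nonunital) algebra over a field of characteristic 0. -/
theorem stmt_4 {K : Type*} [Field K] [CharZero K]
    {A : Type*} [NonUnitalNonAssocRing A] [Module K A]
    [SMulCommClass K A A] [IsScalarTower K A A]
    (lcom : ∀ a b c : A, a*(b*c) = b*(a*c))
    (rsym : ∀ a b c : A, (a*b)*c - a*(b*c) = (a*c)*b - a*(c*b))
    (metab : ∀ a b c d : A, (a*b)*(c*d) = 0) :
    ∀ a b c d e : A, ((a*(b*c))*d)*e = 0 := by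
  have key : ∀ x y z w : A, (x*(y*z))*w = -(w*(x*(y*z))) := by
    intro x y z w
    have h := rsym x (y*z) w
    rw [lcom x (y*z) w, metab y z x w, metab x w y z, lcom x w (y*z)] at h
    simpa using h
  intro a b c d e
  calc ((a*(b*c))*d)*e
      = (-(d*(a*(b*c))))*e := by rw [key a b c d]
    _ = -((a*(d*(b*c)))*e) := by rw [neg_mul, lcom d a (b*c)]
    _ = -(-(e*(a*(d*(b*c))))) := by rw [key a d (b*c) e]
    _ = e*(d*(a*(b*c))) := by rw [neg_neg, lcom d a (b*c)]
    _ = d*(e*(a*(b*c))) := lcom e d (a*(b*c))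
    _ = d*(-((a*(b*c))*e)) := by rw [key a b c e, neg_neg]
    _ = -(d*((a*(b*c))*e)) := by rw [mul_neg]
    _ = -((a*(b*c))*(d*e)) := by rw [lcom d (a*(b*c)) e]
    _ = 0 := by rw [metab a (b*c) d e, neg_zero]
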